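/- Let T be a finite tree in which every internal node has degree 3, and let W > 0 be a real number. Suppose μ maps ordered pairs of adjacent nodes of T to nonnegative reals such that: (S1) for every pair of adjacent nodes x, y, (9/10)W ≤ μ(x,y) + μ(y,x) ≤ W; (S2) if x is an internal node with neighbors y1, y2, y3, then μ(x,y2) + μ(x,y3) ≤ μ(y1,x) ≤ μ(x,y2) + μ(x,y3) + (1/10)W; (S3) whenever x, y are adjacent and x is a leaf, μ(y,x) < (9/20)W. Then there exists an edge xy of T such that (1/4)W < μ(x,y) < (3/4)W and (1/4)W < μ(y,x) < (3/4)W. -/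
import Mathlib


/-- Balanced edge in a degree-3 tree with an almost-additive edge measure. -/
theorem stmt_0 {V : Type*} [Fintype V] [Nontrivial V] [DecidableEq V]
    (G : SimpleGraph V) [DecidableRel G.Adj] (hT : G.IsTree)
    (hdeg : ∀ v : V, 2 ≤ G.degree v → G.degree v = 3)
    (W : ℝ) (hW : 0 < W) (μ : V → V → ℝ)
    (hμ0 : ∀ x y, G.Adj x y → 0 ≤ μ x y)
    (hS1 : ∀ x y, G.Adj x y →
      9/10 * W ≤ μ x y + μ y x ∧ μ x y + μ y x ≤ W)
    (hS2 : ∀ x y₁ y₂ y₃, G.Adj x y₁ → G.Adj x y₂ → G.Adj x y₃ →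
      y₁ ≠ y₂ → y₁ ≠ y₃ → y₂ ≠ y₃ →
      μ x y₂ + μ x y₃ ≤ μ y₁ x ∧ μ y₁ x ≤ μ x y₂ + μ x y₃ + 1/10 * W)
    (hS3 : ∀ x y, G.Adj x y → G.degree x = 1 → μ y x < 9/20 * W) :
    ∃ x y, G.Adj x y ∧
      1/4 * W < μ x y ∧ μ x y < 3/4 * W ∧
      1/4 * W < μ y x ∧ μ y x < 3/4 * W := by
  classical
  by_contra hcon
  push_neg at hcon
  -- Dichotomy: every edge is "light" on exactly one side and "heavy" on the other.
  have hdi : ∀ x y, G.Adj x y →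
      (μ x y ≤ 1/4 * W ∧ 13/20 * W ≤ μ y x) ∨
      (μ y x ≤ 1/4 * W ∧ 13/20 * W ≤ μ x y) := by
    intro x y hxy
    have h1 := hS1 x y hxy
    have hc := hcon x y hxy
    by_cases hA : μ x y ≤ 1/4 * W
    · exact Or.inl ⟨hA, by linarith [h1.1]⟩
    · push_neg at hA
      by_cases hB : μ y x ≤ 1/4 * W
      · exact Or.inr ⟨hB, by linarith [h1.1]⟩
      · push_neg at hB
        exfalso
        rcases le_or_gt (3/4 * W) (μ x y) with h | h
        · linarith [h1.2]
        · have := hc hA h hB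
          linarith [h1.2]
  -- A sink (vertex with all outgoing values light) exists.
  have hsink : ∃ v : V, ∀ u, G.Adj v u → μ v u ≤ 1/4 * W := by
    by_contra hns
    push_neg at hns
    choose f hf1 hf2 using hns
    have hheavy : ∀ v : V, 13/20 * W ≤ μ v (f v) := by
      intro v
      rcases hdi v (f v) (hf1 v) with ⟨h, _⟩ | ⟨_, h⟩
      · exact absurd h (not_le.mpr (hf2 v))
      · exact h
    -- v ↦ edge (v, f v) is injective into the edge set
    have hinj : Set.InjOn (fun v => s(v, f v)) (Finset.univ : Finset V) := by
      intro u _ v _ huv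
      simp only [Sym2.eq_iff] at huv
      rcases huv with ⟨h, _⟩ | ⟨h1, h2⟩
      · exact h
      · exfalso
        have hs := (hS1 v (f v) (hf1 v)).2
        have h1' : μ (f v) v = μ u (f u) := by rw [← h1, ← h2]
        have := hheavy u
        have := hheavy v
        linarith
    have hmaps : ∀ v ∈ (Finset.univ : Finset V), s(v, f v) ∈ G.edgeFinset := by
      intro v _
      rw [SimpleGraph.mem_edgeFinset]
      exact (hf1 v)
    have hcard : (Finset.univ : Finset V).card ≤ G.edgeFinset.card :=
      Finset.card_le_card_of_injOn _ hmaps hinj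
    rw [Finset.card_univ] at hcard
    have he := hT.card_edgeFinset
    omega
  obtain ⟨v, hv⟩ := hsink
  -- v has a neighbor
  have hnb : ∃ u, G.Adj v u := by
    obtain ⟨w, hw⟩ := exists_ne v
    obtain ⟨p⟩ := hT.isConnected.preconnected v w
    cases p with
    | nil => exact absurd rfl hw.symm
    | cons h _ => exact ⟨_, h⟩
  obtain ⟨u, hu⟩ := hnb
  -- all incoming values at v are heavy
  have hin : ∀ u, G.Adj v u → 13/20 * W ≤ μ u v := by
    intro u hu
    rcases hdi v u hu with ⟨_, h⟩ | ⟨_, h⟩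
    · exact h
    · exfalso; have := hv u hu; linarith
  have hdpos : 0 < G.degree v := by
    rw [G.degree_pos_iff_exists_adj]
    exact ⟨u, hu⟩
  by_cases hd1 : G.degree v = 1
  · -- leaf sink contradicts S3
    have := hS3 v u hu hd1
    have := hin u hu
    linarith
  · -- degree must be 3
    have hd3 : G.degree v = 3 := hdeg v (by omega)
    have hcard3 : (G.neighborFinset v).card = 3 := by
      rwa [G.card_neighborFinset_eq_degree]
    obtain ⟨a, b, c, hab, hac, hbc, habc⟩ := Finset.card_eq_three.mp hcard3
    have ha : G.Adj v a := by
      rw [← SimpleGraph.mem_neighborFinset, habc]; simp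
    have hb : G.Adj v b := by
      rw [← SimpleGraph.mem_neighborFinset, habc]; simp
    have hc : G.Adj v c := by
      rw [← SimpleGraph.mem_neighborFinset, habc]; simp
    have h2 := (hS2 v a b c ha hb hc hab hac hbc).2
    have := hin a ha
    have := hv b hb
    have := hv c hc
    linarith
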